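/- The 4-uniform hypergraph B(n,t), obtained by partitioning an n-set into two parts of sizes n/2+t and n/2-t and taking as edges all 4-sets with exactly one vertex in one part and three in the other, contains no copy of C^(4)_3 (three pairwise disjoint pairs P1,P2,P3 of vertices with all three unions P_i ∪ P_j being edges). -/
import Mathlib

/-- the hypergraph `B(n,t)` (edges = 4-sets with exactly one vertex in one
part, three in the other part of a bipartition) contains no copy of `C^(4)_3`. -/
theorem stmt_1 {V : Type*} [DecidableEq V] (V1 : Finset V)
    (IsEdge : Finset V → Prop)
    (hEdge : ∀ e : Finset V, IsEdge e ↔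
      ((e ∩ V1).card = 1 ∧ (e \ V1).card = 3) ∨ ((e ∩ V1).card = 3 ∧ (e \ V1).card = 1))
    (P1 P2 P3 : Finset V)
    (h1 : P1.card = 2) (h2 : P2.card = 2) (h3 : P3.card = 2)
    (d12 : Disjoint P1 P2) (d13 : Disjoint P1 P3) (d23 : Disjoint P2 P3) :
    ¬ (IsEdge (P1 ∪ P2) ∧ IsEdge (P1 ∪ P3) ∧ IsEdge (P2 ∪ P3)) := by
  rintro ⟨e12, e13, e23⟩
  rw [hEdge] at e12 e13 e23
  have key : ∀ P Q : Finset V, Disjoint P Q →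
      ((P ∪ Q) ∩ V1).card = (P ∩ V1).card + (Q ∩ V1).card := by
    intro P Q h
    rw [Finset.union_inter_distrib_right,
      Finset.card_union_of_disjoint (h.mono Finset.inter_subset_left Finset.inter_subset_left)]
  rw [key _ _ d12] at e12
  rw [key _ _ d13] at e13
  rw [key _ _ d23] at e23
  omega
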